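/- For every complex-valued Schwartz function φ on ℝ, lim_{t→+∞} (1/t) ∫_ℝ (∫₀ᵗ (∫₀^{t₁} e^{ixt₂} dt₂) dt₁) φ(x) dx = lim_{ε→0⁺} ∫_ℝ (i/(x+iε)) φ(x) dx, and both limits exist. Equivalently, as tempered distributions, (1−e^{ixt}+ixt)/(t x²) converges to i/(x+i0) as t → +∞. -/

import Mathlib

open MeasureTheory Filter Set
open scoped FourierTransform Real



noncomputable section CesaroAux

/-- `ψ s = ∫ e^{ixs} φ(x) dx`. -/
def psiF (φ : SchwartzMap ℝ ℂ) : ℝ → ℂ :=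
  fun s => ∫ x : ℝ, Complex.exp (Complex.I * x * s) * φ x

lemma psiF_eq (φ : SchwartzMap ℝ ℂ) (s : ℝ) :
    psiF φ s = 𝓕 (fun x => φ x) ((-1 / (2 * π)) * s) := by
  rw [Real.fourier_real_eq_integral_exp_smul]
  unfold psiF
  congr 1
  ext x
  rw [smul_eq_mul]
  congr 2
  push_cast
  have hπ : (π : ℂ) ≠ 0 := by exact_mod_cast Real.pi_ne_zero
  field_simp

lemma psiF_integrable (φ : SchwartzMap ℝ ℂ) : Integrable (psiF φ) := by
  have h : Integrable (fun w : ℝ => 𝓕 (fun x => φ x) w) := by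
    have := (SchwartzMap.fourierTransformCLM ℂ (φ : SchwartzMap ℝ ℂ)).integrable (μ := volume)
    simpa [SchwartzMap.fourierTransformCLM_apply, SchwartzMap.fourier_coe] using this
  have h2 := h.comp_mul_left' (R := -1 / (2 * π)) (by
    simp [Real.pi_ne_zero])
  refine h2.congr ?_
  filter_upwards with s
  rw [psiF_eq]

lemma psiF_continuous (φ : SchwartzMap ℝ ℂ) : Continuous (psiF φ) := by
  have h : Continuous (fun w : ℝ => 𝓕 (fun x => φ x) w) := by
    have := (SchwartzMap.fourierTransformCLM ℂ (φ : SchwartzMap ℝ ℂ)).continuous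
    simpa [SchwartzMap.fourierTransformCLM_apply, SchwartzMap.fourier_coe] using this
  have : Continuous (fun s : ℝ => 𝓕 (fun x => φ x) ((-1 / (2 * π)) * s)) :=
    h.comp (by continuity)
  refine this.congr ?_
  intro s
  rw [psiF_eq]

end CesaroAux

lemma psiF_def (φ : SchwartzMap ℝ ℂ) (s : ℝ) :
    psiF φ s = ∫ x : ℝ, Complex.exp (Complex.I * x * s) * φ x := rfl

lemma integrableOn_cexp_Ioi {c : ℂ} (hc : c.re < 0) :
    IntegrableOn (fun s : ℝ => Complex.exp (c * s)) (Ioi (0:ℝ)) := by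
  refine Integrable.mono' (g := fun s : ℝ => Real.exp (-(-c.re) * s))
    (exp_neg_integrableOn_Ioi 0 (by linarith)) ?_ ?_
  · exact (Complex.continuous_exp.comp (by continuity)).aestronglyMeasurable
  · filter_upwards with s
    rw [Complex.norm_exp]
    simp [Complex.mul_re]

lemma hasDerivAt_cexp_div {c : ℂ} (hc : c ≠ 0) (s : ℝ) :
    HasDerivAt (fun u : ℝ => Complex.exp (c * u) / c) (Complex.exp (c * s)) s := by
  have h1 : HasDerivAt (fun z : ℂ => Complex.exp (c * z) / c) (Complex.exp (c * s)) (s : ℂ) := by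
    have h2 : HasDerivAt (fun z : ℂ => c * z) c (s : ℂ) := by
      simpa using (hasDerivAt_id ((s : ℝ) : ℂ)).const_mul c
    have h3 := h2.cexp
    have h4 := h3.div_const c
    simpa [mul_div_cancel_right₀ _ hc] using h4
  exact h1.comp_ofReal

lemma tendsto_cexp_div_atTop {c : ℂ} (hc : c.re < 0) :
    Tendsto (fun s : ℝ => Complex.exp (c * s) / c) atTop (nhds 0) := by
  refine squeeze_zero_norm (a := fun s : ℝ => Real.exp (c.re * s) / ‖c‖) (fun s => ?_) ?_
  · rw [norm_div, Complex.norm_exp]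
    simp [Complex.mul_re]
  · have h1 : Tendsto (fun s : ℝ => c.re * s) atTop atBot :=
      tendsto_id.const_mul_atTop_of_neg hc
    have h2 := Real.tendsto_exp_atBot.comp h1
    simpa using h2.div_const ‖c‖

lemma integral_cexp_Ioi {c : ℂ} (hc : c.re < 0) :
    ∫ s : ℝ in Ioi (0:ℝ), Complex.exp (c * s) = -c⁻¹ := by
  have hc0 : c ≠ 0 := fun h => by simp [h] at hc
  have := integral_Ioi_of_hasDerivAt_of_tendsto
    (f := fun u : ℝ => Complex.exp (c * u) / c)
    (f' := fun s : ℝ => Complex.exp (c * s)) (a := 0)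
    ((hasDerivAt_cexp_div hc0 0).continuousAt.continuousWithinAt)
    (fun x _ => hasDerivAt_cexp_div hc0 x)
    (integrableOn_cexp_Ioi hc)
    (tendsto_cexp_div_atTop hc)
  rw [this]
  simp [one_div]

lemma eps_side (φ : SchwartzMap ℝ ℂ) {ε : ℝ} (hε : 0 < ε) :
    ∫ x : ℝ, (Complex.I / ((x : ℂ) + Complex.I * (ε : ℂ))) * φ x
      = ∫ s in Ioi (0:ℝ), Complex.exp (-(ε:ℂ) * s) * psiF φ s := by
  have key : ∀ x : ℝ, (Complex.I / ((x : ℂ) + Complex.I * ε))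
      = ∫ s in Ioi (0:ℝ), Complex.exp ((Complex.I * x - ε) * s) := by
    intro x
    have hre : (Complex.I * x - ε).re < 0 := by simpa using hε
    rw [integral_cexp_Ioi hre]
    have h1 : ((x : ℂ) + Complex.I * ε) ≠ 0 := by
      intro h
      have := congrArg Complex.im h
      simp at this
      exact hε.ne' this
    have h2 : (Complex.I * x - ε) ≠ 0 := by
      intro h
      have := congrArg Complex.re h
      simp at this
      exact hε.ne' this
    field_simp
    linear_combination (x : ℂ) * Complex.I_sq
  simp_rw [key, ← MeasureTheory.integral_mul_const]
  rw [MeasureTheory.integral_integral_swap]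
  · congr 1
    ext s
    rw [psiF_def, ← MeasureTheory.integral_const_mul]
    congr 1
    ext x
    rw [← mul_assoc, ← Complex.exp_add]
    congr 2
    ring
  · -- integrability on the product
    refine Integrable.mono'
      (g := fun p : ℝ × ℝ => ‖φ p.1‖ * Real.exp (-ε * p.2)) ?_ ?_ ?_
    · exact (φ.integrable.norm).mul_prod (exp_neg_integrableOn_Ioi 0 hε)
    · apply Continuous.aestronglyMeasurable
      apply Continuous.mul
      · exact Complex.continuous_exp.comp (by continuity)
      · exact φ.continuous.comp continuous_fst
    · filter_upwards with p
      obtain ⟨x, s⟩ := p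
      simp only [Function.uncurry]
      apply le_of_eq
      rw [norm_mul, mul_comm]
      congr 1
      rw [Complex.norm_exp]
      congr 1
      simp [Complex.mul_re, Complex.sub_re]

lemma eps_tendsto (φ : SchwartzMap ℝ ℂ) :
    Tendsto (fun ε : ℝ => ∫ s in Ioi (0:ℝ), Complex.exp (-(ε:ℂ) * s) * psiF φ s)
      (nhdsWithin 0 (Ioi 0)) (nhds (∫ s in Ioi (0:ℝ), psiF φ s)) := by
  apply tendsto_integral_filter_of_dominated_convergence (bound := fun s => ‖psiF φ s‖)
  · filter_upwards with ε
    exact ((Complex.continuous_exp.comp (by continuity)).mul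
      (psiF_continuous φ)).aestronglyMeasurable
  · filter_upwards [eventually_mem_nhdsWithin] with ε (hε : ε ∈ Ioi (0:ℝ))
    rw [ae_restrict_iff' measurableSet_Ioi]
    filter_upwards with s hs
    rw [norm_mul]
    have h1 : ‖Complex.exp (-(ε:ℂ) * s)‖ ≤ 1 := by
      rw [Complex.norm_exp]
      apply Real.exp_le_one_iff.mpr
      have : (-(ε:ℂ) * s).re = -ε * s := by simp
      rw [this]
      nlinarith [hε.out, hs.out]
    calc ‖Complex.exp (-(ε:ℂ) * s)‖ * ‖psiF φ s‖ ≤ 1 * ‖psiF φ s‖ := by gcongr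
    _ = ‖psiF φ s‖ := one_mul _
  · exact (psiF_integrable φ).norm.restrict
  · filter_upwards with s
    have hc : Continuous (fun ε : ℝ => Complex.exp (-(ε:ℂ) * s) * psiF φ s) :=
      (Complex.continuous_exp.comp (by continuity)).mul continuous_const
    have := (hc.tendsto 0).mono_left (nhdsWithin_le_nhds (s := Ioi (0:ℝ)))
    simpa using this

lemma triangle_integral {f : ℝ → ℂ} (hf : Continuous f) (t : ℝ) :
    (∫ t₁ in (0:ℝ)..t, (∫ t₂ in (0:ℝ)..t₁, f t₂))
      = ∫ s in (0:ℝ)..t, ((t:ℂ) - s) * f s := by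
  set F : ℝ → ℂ := fun u => ∫ t₂ in (0:ℝ)..u, f t₂ with hFdef
  have hF : ∀ u, HasDerivAt F (f u) u := fun u => (hf.integral_hasStrictDerivAt 0 u).hasDerivAt
  have hFc : Continuous F := continuous_iff_continuousAt.2 fun u => (hF u).continuousAt
  have hsf : Continuous (fun s : ℝ => (s:ℂ) * f s) := Complex.continuous_ofReal.mul hf
  set G : ℝ → ℂ := fun u =>
    (∫ t₁ in (0:ℝ)..u, F t₁) - ((u:ℂ) * F u - ∫ s in (0:ℝ)..u, (s:ℂ) * f s) with hGdef
  have hG : ∀ u, HasDerivAt G 0 u := by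
    intro u
    have hA : HasDerivAt (fun u => ∫ t₁ in (0:ℝ)..u, F t₁) (F u) u :=
      (hFc.integral_hasStrictDerivAt 0 u).hasDerivAt
    have h1 : HasDerivAt (fun u : ℝ => (u:ℂ)) 1 u := by
      simpa using (hasDerivAt_id u).ofReal_comp
    have hB : HasDerivAt (fun u : ℝ => (u:ℂ) * F u) (1 * F u + (u:ℂ) * f u) u :=
      h1.mul (hF u)
    have hC : HasDerivAt (fun u => ∫ s in (0:ℝ)..u, (s:ℂ) * f s) ((u:ℂ) * f u) u :=
      (hsf.integral_hasStrictDerivAt 0 u).hasDerivAt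
    have := hA.sub (hB.sub hC)
    convert this using 1
    · rfl
    · funext v
      simp only [hGdef, Pi.add_apply, Pi.sub_apply]
    · ring
  have hconst := is_const_of_deriv_eq_zero (𝕜 := ℝ)
    (fun u => (hG u).differentiableAt) (fun u => (hG u).deriv) t 0
  have hG0 : G 0 = 0 := by simp [hGdef]
  rw [hG0] at hconst
  have hGt : G t = 0 := hconst
  have hsub : (∫ s in (0:ℝ)..t, ((t:ℂ) - s) * f s)
      = (t:ℂ) * (∫ s in (0:ℝ)..t, f s) - ∫ s in (0:ℝ)..t, (s:ℂ) * f s := by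
    rw [← intervalIntegral.integral_const_mul, ← intervalIntegral.integral_sub
      (by exact (continuous_const.mul hf).intervalIntegrable _ _ :
          IntervalIntegrable (fun s => (t:ℂ) * f s) MeasureTheory.volume 0 t) (hsf.intervalIntegrable _ _)]
    exact intervalIntegral.integral_congr fun s _ => by ring
  rw [hsub]
  exact sub_eq_zero.mp hGt

lemma t_side (φ : SchwartzMap ℝ ℂ) {t : ℝ} (ht : 0 < t) :
    ∫ x : ℝ, (∫ s in (0:ℝ)..t, ((t:ℂ) - s) * Complex.exp (Complex.I * x * s)) * φ x
      = ∫ s in Ioc (0:ℝ) t, ((t:ℂ) - s) * psiF φ s := by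
  have hrw : ∀ x : ℝ, (∫ s in (0:ℝ)..t, ((t:ℂ) - s) * Complex.exp (Complex.I * x * s))
      = ∫ s in Ioc (0:ℝ) t, ((t:ℂ) - s) * Complex.exp (Complex.I * x * s) :=
    fun x => intervalIntegral.integral_of_le ht.le
  simp_rw [hrw, ← MeasureTheory.integral_mul_const]
  rw [MeasureTheory.integral_integral_swap]
  · congr 1
    ext s
    rw [psiF_def, ← MeasureTheory.integral_const_mul]
    congr 1
    ext x
    ring
  · refine Integrable.mono'
      (g := fun p : ℝ × ℝ => ‖φ p.1‖ * (t + |p.2|)) ?_ ?_ ?_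
    · exact (φ.integrable.norm).mul_prod
        ((continuous_const.add continuous_abs).integrableOn_Ioc (a := 0) (b := t))
    · apply Continuous.aestronglyMeasurable
      apply Continuous.mul
      · apply Continuous.mul
        · exact continuous_const.sub (Complex.continuous_ofReal.comp continuous_snd)
        · exact Complex.continuous_exp.comp (by continuity)
      · exact φ.continuous.comp continuous_fst
    · filter_upwards with p
      obtain ⟨x, s⟩ := p
      simp only [Function.uncurry]
      rw [norm_mul, norm_mul, mul_comm (‖φ x‖)]
      gcongr
      have h1 : ‖Complex.exp (Complex.I * x * s)‖ = 1 := by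
        rw [Complex.norm_exp]
        simp [Complex.mul_re]
      rw [h1, mul_one]
      have h2 : ‖(t:ℂ) - s‖ = |t - s| := by
        rw [← Complex.ofReal_sub, Complex.norm_real, Real.norm_eq_abs]
      rw [h2]
      calc |t - s| ≤ |t| + |s| := abs_sub _ _
      _ = t + |s| := by rw [abs_of_pos ht]

lemma t_tendsto (φ : SchwartzMap ℝ ℂ) :
    Tendsto (fun t : ℝ => ∫ s in Ioi (0:ℝ),
        Set.indicator (Ioc (0:ℝ) t) (fun s => (((1 - s/t : ℝ)):ℂ) * psiF φ s) s)
      atTop (nhds (∫ s in Ioi (0:ℝ), psiF φ s)) := by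
  apply tendsto_integral_filter_of_dominated_convergence (bound := fun s => ‖psiF φ s‖)
  · filter_upwards with t
    refine AEStronglyMeasurable.indicator ?_ measurableSet_Ioc
    exact ((Complex.continuous_ofReal.comp (by continuity)).mul
      (psiF_continuous φ)).aestronglyMeasurable
  · filter_upwards [eventually_ge_atTop (1:ℝ)] with t ht
    filter_upwards with s
    by_cases h : s ∈ Ioc (0:ℝ) t
    · rw [Set.indicator_of_mem h, norm_mul]
      have hb : ‖(((1 - s/t : ℝ)):ℂ)‖ ≤ 1 := by
        rw [Complex.norm_real, Real.norm_eq_abs, abs_le]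
        have ht0 : (0:ℝ) < t := lt_of_lt_of_le one_pos ht
        have h1 : 0 ≤ s / t := div_nonneg h.1.le ht0.le
        have h2 : s / t ≤ 1 := (div_le_one ht0).mpr h.2
        constructor <;> linarith
      calc ‖(((1 - s/t : ℝ)):ℂ)‖ * ‖psiF φ s‖ ≤ 1 * ‖psiF φ s‖ := by gcongr
      _ = ‖psiF φ s‖ := one_mul _
    · rw [Set.indicator_of_notMem h]
      simp [norm_nonneg]
  · exact (psiF_integrable φ).norm.restrict
  · rw [ae_restrict_iff' measurableSet_Ioi]
    filter_upwards with s hs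
    have hs0 : (0:ℝ) < s := hs
    have hev : ∀ᶠ t : ℝ in atTop,
        Set.indicator (Ioc (0:ℝ) t) (fun s => (((1 - s/t : ℝ)):ℂ) * psiF φ s) s
          = (((1 - s/t : ℝ)):ℂ) * psiF φ s := by
      filter_upwards [eventually_ge_atTop s] with t ht
      exact Set.indicator_of_mem (show s ∈ Ioc (0:ℝ) t from ⟨hs0, ht⟩) _
    refine Tendsto.congr' (Filter.EventuallyEq.symm hev) ?_
    have h1 : Tendsto (fun t : ℝ => s / t) atTop (nhds 0) :=
      Tendsto.div_atTop tendsto_const_nhds tendsto_id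
    have h2 : Tendsto (fun t : ℝ => (((1 - s/t : ℝ)):ℂ)) atTop (nhds 1) := by
      have h3 : Tendsto (fun t : ℝ => (1 - s/t : ℝ)) atTop (nhds 1) := by
        simpa using tendsto_const_nhds.sub h1
      have := (Complex.continuous_ofReal.tendsto 1).comp h3
      simpa [Function.comp_def] using this
    simpa using h2.mul (tendsto_const_nhds (x := psiF φ s))

/-- As tempered distributions, `(1 − e^{ixt} + ixt)/(t x²) = (1/t)∫₀ᵗ∫₀^{t₁} e^{ixt₂} dt₂ dt₁`
converges to `i/(x+i0)` as `t → +∞`. -/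
theorem cesaro_time_integral_tendsto_i_div_x_plus_i0 (φ : SchwartzMap ℝ ℂ) :
    ∃ L : ℂ,
      Tendsto (fun ε : ℝ => ∫ x : ℝ, (Complex.I / ((x : ℂ) + Complex.I * (ε : ℂ))) * φ x)
        (nhdsWithin 0 (Set.Ioi 0)) (nhds L) ∧
      Tendsto (fun t : ℝ =>
          (1 / (t : ℂ)) * ∫ x : ℝ,
            (∫ t₁ in (0:ℝ)..t, ∫ t₂ in (0:ℝ)..t₁,
              Complex.exp (Complex.I * (x : ℂ) * (t₂ : ℂ))) * φ x)
        atTop (nhds L) := by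
  refine ⟨∫ s in Ioi (0:ℝ), psiF φ s, ?_, ?_⟩
  · refine Tendsto.congr' ?_ (eps_tendsto φ)
    filter_upwards [eventually_mem_nhdsWithin] with ε (hε : ε ∈ Ioi (0:ℝ))
    exact (eps_side φ hε).symm
  · refine Tendsto.congr' ?_ (t_tendsto φ)
    filter_upwards [eventually_ge_atTop (1:ℝ)] with t ht
    have ht0 : (0:ℝ) < t := lt_of_lt_of_le one_pos ht
    have htC : ((t:ℂ)) ≠ 0 := Complex.ofReal_ne_zero.mpr ht0.ne'
    calc (∫ s in Ioi (0:ℝ),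
            Set.indicator (Ioc (0:ℝ) t) (fun s => (((1 - s/t : ℝ)):ℂ) * psiF φ s) s)
        = ∫ s in Ioc (0:ℝ) t, (((1 - s/t : ℝ)):ℂ) * psiF φ s := by
          rw [setIntegral_indicator measurableSet_Ioc,
            inter_eq_self_of_subset_right Ioc_subset_Ioi_self]
      _ = ∫ s in Ioc (0:ℝ) t, (1/(t:ℂ)) * (((t:ℂ) - s) * psiF φ s) := by
          congr 1
          funext s
          rw [← mul_assoc]
          congr 1
          push_cast
          field_simp
      _ = (1/(t:ℂ)) * ∫ s in Ioc (0:ℝ) t, ((t:ℂ) - s) * psiF φ s :=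
          MeasureTheory.integral_const_mul _ _
      _ = (1/(t:ℂ)) * ∫ x : ℝ,
            (∫ t₁ in (0:ℝ)..t, ∫ t₂ in (0:ℝ)..t₁,
              Complex.exp (Complex.I * (x : ℂ) * (t₂ : ℂ))) * φ x := by
          rw [← t_side φ ht0]
          congr 1
          apply MeasureTheory.integral_congr_ae
          filter_upwards with x
          congr 1
          exact (triangle_integral (f := fun t₂ : ℝ => Complex.exp (Complex.I * x * t₂))
            (by continuity) t).symm
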